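/- Let Γ be a group and {X₁, …, X_m} a finite family of finite subgroups of Γ that is invariant under conjugation (for every g ∈ Γ and every i, gX_ig⁻¹ equals some X_j). Then every element of the subgroup N generated by X₁ ∪ ⋯ ∪ X_m can be written as a product g₁⋯g_k with k ≤ m and each g_i ∈ X₁ ∪ ⋯ ∪ X_m. In particular, N is finite. -/

import Mathlib

/-- Conjugating every entry of a list conjugates the product. -/
private lemma conj_list_prod {Γ : Type*} [Group Γ] (b : Γ) (M : List Γ) :
    (M.map fun x => b⁻¹ * x * b).prod = b⁻¹ * M.prod * b := by
  have h := List.prod_hom M (MulAut.conj b⁻¹).toMonoidHom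
  simpa [MulAut.conj] using h

/-- If two (not necessarily adjacent) entries of a list lie in the same finite subgroup,
the list can be shortened by one while preserving the product, keeping all entries in the
union, by merging the two entries and conjugating everything in between. -/
private lemma surgery {Γ : Type*} [Group Γ] {m : ℕ} (X : Fin m → Subgroup Γ)
    (hconjU : ∀ (g : Γ), ∀ x ∈ ⋃ i, (X i : Set Γ), g * x * g⁻¹ ∈ ⋃ i, (X i : Set Γ))
    (l : List Γ) (hmem : ∀ x ∈ l, x ∈ ⋃ i, (X i : Set Γ))
    (s t : ℕ) (hst : s < t) (ht : t < l.length) (j : Fin m)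
    (ha : l.get ⟨s, lt_trans hst ht⟩ ∈ X j) (hb : l.get ⟨t, ht⟩ ∈ X j) :
    ∃ l' : List Γ, l'.length + 1 = l.length ∧ (∀ x ∈ l', x ∈ ⋃ i, (X i : Set Γ)) ∧
      l'.prod = l.prod := by
  set a : Γ := l.get ⟨s, lt_trans hst ht⟩ with haa
  set b : Γ := l.get ⟨t, ht⟩ with hbb
  set A : List Γ := l.take s with hA
  set M : List Γ := (l.drop (s + 1)).take (t - (s + 1)) with hM
  set C : List Γ := l.drop (t + 1) with hC
  have hdecomp : l = A ++ a :: (M ++ b :: C) := by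
    have h1 : l = l.take s ++ l.drop s := (List.take_append_drop _ _).symm
    have h2 : l.drop s = a :: l.drop (s + 1) := by
      rw [List.drop_eq_getElem_cons (lt_trans hst ht)]
      rfl
    have h3 : l.drop (s + 1) = M ++ (l.drop (s + 1)).drop (t - (s + 1)) :=
      (List.take_append_drop _ _).symm
    have h4 : (l.drop (s + 1)).drop (t - (s + 1)) = l.drop t := by
      rw [List.drop_drop]
      congr 1
      omega
    have h5 : l.drop t = b :: l.drop (t + 1) := by
      rw [List.drop_eq_getElem_cons ht]
      rfl
    calc l = l.take s ++ l.drop s := h1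
      _ = A ++ a :: l.drop (s + 1) := by rw [h2]
      _ = A ++ a :: (M ++ (l.drop (s + 1)).drop (t - (s + 1))) := by rw [← h3]
      _ = A ++ a :: (M ++ b :: C) := by rw [h4, h5]
  refine ⟨A ++ (a * b) :: ((M.map fun x => b⁻¹ * x * b) ++ C), ?_, ?_, ?_⟩
  · have := congrArg List.length hdecomp
    simp only [List.length_append, List.length_cons, List.length_map] at this ⊢
    omega
  · intro x hx
    simp only [List.mem_append, List.mem_cons, List.mem_map] at hx
    rcases hx with hx | hx | ⟨⟨y, hy, rfl⟩ | hx⟩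
    · exact hmem x (List.take_subset _ _ hx)
    · subst hx
      exact Set.mem_iUnion.2 ⟨j, mul_mem ha hb⟩
    · have hyU : y ∈ ⋃ i, (X i : Set Γ) :=
        hmem y (List.drop_subset _ _ (List.take_subset _ _ hy))
      have := hconjU b⁻¹ y hyU
      simpa using this
    · exact hmem x (List.drop_subset _ _ hx)
  · conv_rhs => rw [hdecomp]
    simp only [List.prod_append, List.prod_cons, conj_list_prod]
    group

/-- Any product of elements of the union can be shortened to length at most `m`. -/
private lemma shorten {Γ : Type*} [Group Γ] {m : ℕ} (X : Fin m → Subgroup Γ)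
    (hconjU : ∀ (g : Γ), ∀ x ∈ ⋃ i, (X i : Set Γ), g * x * g⁻¹ ∈ ⋃ i, (X i : Set Γ)) :
    ∀ (n : ℕ) (l : List Γ), l.length = n → (∀ x ∈ l, x ∈ ⋃ i, (X i : Set Γ)) →
      ∃ l' : List Γ, l'.length ≤ m ∧ (∀ x ∈ l', x ∈ ⋃ i, (X i : Set Γ)) ∧ l'.prod = l.prod := by
  intro n
  induction n using Nat.strong_induction_on with
  | _ n IH =>
    intro l hlen hmem
    by_cases hle : l.length ≤ m
    · exact ⟨l, hle, hmem, rfl⟩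
    push_neg at hle
    have hget : ∀ t : Fin l.length, ∃ i, l.get t ∈ X i := by
      intro t
      have := hmem (l.get t) (l.get_mem t)
      simpa [Set.mem_iUnion] using this
    choose f hf using hget
    have hcard : Fintype.card (Fin m) < Fintype.card (Fin l.length) := by simpa using hle
    obtain ⟨s, t, hst, hfeq⟩ := Fintype.exists_ne_map_eq_of_card_lt f hcard
    have key : ∃ l' : List Γ, l'.length + 1 = l.length ∧
        (∀ x ∈ l', x ∈ ⋃ i, (X i : Set Γ)) ∧ l'.prod = l.prod := by
      rcases Nat.lt_or_ge s.val t.val with hlt | hge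
      · exact surgery X hconjU l hmem s.val t.val hlt t.isLt (f s)
          (by simpa using hf s) (by rw [hfeq]; simpa using hf t)
      · have hlt : t.val < s.val := by
          rcases Nat.lt_or_ge t.val s.val with h | h
          · exact h
          · exact absurd (Fin.ext (le_antisymm h hge)) hst
        exact surgery X hconjU l hmem t.val s.val hlt s.isLt (f s)
          (by rw [hfeq]; simpa using hf t) (by simpa using hf s)
    obtain ⟨l', hlen', hmem', hprod'⟩ := key
    obtain ⟨l'', h1, h2, h3⟩ := IH l'.length (by omega) l' rfl hmem'
    exact ⟨l'', h1, h2, h3.trans hprod'⟩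

private lemma lists_finite {Γ : Type*} (U : Set Γ) (hU : U.Finite) :
    ∀ k : ℕ, {l : List Γ | l.length ≤ k ∧ ∀ x ∈ l, x ∈ U}.Finite := by
  intro k
  induction k with
  | zero =>
    apply Set.Finite.subset (Set.finite_singleton ([] : List Γ))
    rintro l ⟨hl, -⟩
    simp [List.length_eq_zero_iff.1 (Nat.le_zero.1 hl)]
  | succ k ih =>
    apply Set.Finite.subset (Set.Finite.insert ([] : List Γ) (Set.Finite.image2 List.cons hU ih))
    rintro l ⟨hl, hmem⟩
    cases l with
    | nil => exact Set.mem_insert _ _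
    | cons a tl =>
      refine Set.mem_insert_of_mem _ (Set.mem_image2_of_mem (hmem a (by simp)) ?_)
      exact ⟨by simpa using hl, fun x hx => hmem x (by simp [hx])⟩

/-- If `X₁, …, X_m` is a conjugation-invariant finite family of finite subgroups of `Γ`,
then every element of the subgroup generated by their union is a product of at most `m`
elements of the union; in particular that subgroup is finite. -/
theorem stmt_5 {Γ : Type*} [Group Γ] {m : ℕ} (X : Fin m → Subgroup Γ)
    (hfin : ∀ i, (X i : Set Γ).Finite)
    (hconj : ∀ (g : Γ) (i : Fin m), ∃ j,
      Subgroup.map (MulAut.conj g).toMonoidHom (X i) = X j) :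
    (∀ n ∈ Subgroup.closure (⋃ i, (X i : Set Γ)),
      ∃ l : List Γ, l.length ≤ m ∧ (∀ x ∈ l, x ∈ ⋃ i, (X i : Set Γ)) ∧ l.prod = n) ∧
    ((Subgroup.closure (⋃ i, (X i : Set Γ)) : Set Γ)).Finite := by
  set U : Set Γ := ⋃ i, (X i : Set Γ) with hUdef
  have hconjU : ∀ (g : Γ), ∀ x ∈ U, g * x * g⁻¹ ∈ U := by
    intro g x hx
    obtain ⟨i, hi⟩ := Set.mem_iUnion.1 hx
    obtain ⟨j, hj⟩ := hconj g i
    have : g * x * g⁻¹ ∈ X j := by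
      rw [← hj]
      exact ⟨x, hi, rfl⟩
    exact Set.mem_iUnion.2 ⟨j, this⟩
  have hinv : ∀ x ∈ U, x⁻¹ ∈ U := by
    intro x hx
    obtain ⟨i, hi⟩ := Set.mem_iUnion.1 hx
    exact Set.mem_iUnion.2 ⟨i, inv_mem hi⟩
  have main : ∀ n ∈ Subgroup.closure U,
      ∃ l : List Γ, l.length ≤ m ∧ (∀ x ∈ l, x ∈ U) ∧ l.prod = n := by
    intro n hn
    have hn' : n ∈ Submonoid.closure (U ∪ U⁻¹) := by
      rw [← Subgroup.closure_toSubmonoid]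
      exact hn
    obtain ⟨l, hl, hprod⟩ := Submonoid.exists_list_of_mem_closure hn'
    have hlU : ∀ x ∈ l, x ∈ U := by
      intro x hx
      rcases hl x hx with h | h
      · exact h
      · have := hinv x⁻¹ h
        simpa using this
    obtain ⟨l', h1, h2, h3⟩ := shorten X hconjU l.length l rfl hlU
    exact ⟨l', h1, h2, h3.trans hprod⟩
  refine ⟨main, ?_⟩
  have hUfin : U.Finite := Set.finite_iUnion hfin
  have hsub : (Subgroup.closure U : Set Γ) ⊆
      List.prod '' {l : List Γ | l.length ≤ m ∧ ∀ x ∈ l, x ∈ U} := by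
    intro n hn
    obtain ⟨l, h1, h2, h3⟩ := main n hn
    exact ⟨l, ⟨h1, h2⟩, h3⟩
  exact Set.Finite.subset (Set.Finite.image _ (lists_finite U hUfin m)) hsub
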